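/- Let U be a countable structure that has a universal homogeneous endomorphism. Then U is homogeneous if and only if U is homomorphism homogeneous. -/

import Mathlib

universe u v w

open FirstOrder FirstOrder.Language CategoryTheory

namespace UHomog

variable (L : FirstOrder.Language.{u, v})

/-- The class `𝒞̄` of countable structures whose age is contained in `K`. -/
def InBar (K : Set (Bundled.{w} L.Structure)) (A : Type w) [L.Structure A] : Prop :=
  Countable A ∧ L.age A ⊆ K

/-- A homomorphism `u : U → T` is universal within `𝒞̄ = K̄` if every homomorphism from a member
of `K̄` to `T` factors through an embedding into `U`. -/
def IsUniversalHom (K : Set (Bundled.{w} L.Structure)) {U T : Type w}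
    [L.Structure U] [L.Structure T] (u : U →[L] T) : Prop :=
  ∀ A : Bundled.{w} L.Structure, InBar L K A → ∀ h : A →[L] T,
    ∃ ι : A ↪[L] U, ∀ a : A, u (ι a) = h a

/-- A homomorphism `u : U → T` is homogeneous if every embedding of a finitely generated
substructure of `U` into `U` compatible with `u` extends to an automorphism of `U` compatible
with `u`. -/
def IsHomogeneousHom {U T : Type w} [L.Structure U] [L.Structure T] (u : U →[L] T) : Prop :=
  ∀ S : L.Substructure U, S.FG → ∀ ι : S ↪[L] U,
    (∀ s : S, u (ι s) = u s) →
    ∃ α : U ≃[L] U, (∀ x : U, u (α x) = u x) ∧ ∀ s : S, α s = ι s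

/-- An age: a class of finitely generated structures with countably many isomorphism types,
closed under isomorphism, with the hereditary property and the joint embedding property. -/
def IsAge (K : Set (Bundled.{w} L.Structure)) : Prop :=
  K.Nonempty ∧
  (∀ M : Bundled.{w} L.Structure, M ∈ K → Structure.FG L M) ∧
  (∀ M N : Bundled.{w} L.Structure, Nonempty (M ≃[L] N) → (M ∈ K ↔ N ∈ K)) ∧
  (∃ S : Set (Bundled.{w} L.Structure), S.Countable ∧
    ∀ M ∈ K, ∃ N ∈ S, Nonempty (M ≃[L] N)) ∧
  Hereditary K ∧ JointEmbedding K

/-- The square `g₁ ∘ f₁ = g₂ ∘ f₂` is a pushout square in the category of countable structures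
with age contained in `K`, with homomorphisms as morphisms. -/
def IsPushoutSquare (K : Set (Bundled.{w} L.Structure)) {A B₁ B₂ C : Type w}
    [L.Structure A] [L.Structure B₁] [L.Structure B₂] [L.Structure C]
    (f₁ : A ↪[L] B₁) (f₂ : A ↪[L] B₂) (g₁ : B₁ →[L] C) (g₂ : B₂ →[L] C) : Prop :=
  g₁.comp f₁.toHom = g₂.comp f₂.toHom ∧
  ∀ D : Bundled.{w} L.Structure, InBar L K D → ∀ (k₁ : B₁ →[L] D) (k₂ : B₂ →[L] D),
    k₁.comp f₁.toHom = k₂.comp f₂.toHom →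
    ∃! m : C →[L] D, m.comp g₁ = k₁ ∧ m.comp g₂ = k₂

/-- A strict Fraïssé class: a Fraïssé class in which every span of embeddings can be completed to
a canonical (pushout) amalgam. -/
def IsStrictFraisse (K : Set (Bundled.{w} L.Structure)) : Prop :=
  IsFraisse K ∧
  ∀ A B₁ B₂ : Bundled.{w} L.Structure, A ∈ K → B₁ ∈ K → B₂ ∈ K →
    ∀ (f₁ : A ↪[L] B₁) (f₂ : A ↪[L] B₂),
      ∃ (C : Bundled.{w} L.Structure) (g₁ : B₁ →[L] C) (g₂ : B₂ →[L] C),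
        C ∈ K ∧ IsPushoutSquare L K f₁ f₂ g₁ g₂

/-- A Fraïssé class `K₀` is free in the strict Fraïssé class `K` if it is closed with respect to
canonical (pushout) amalgams in `K`. -/
def IsFreeIn (K₀ K : Set (Bundled.{w} L.Structure)) : Prop :=
  K₀ ⊆ K ∧
  ∀ A B₁ B₂ : Bundled.{w} L.Structure, A ∈ K₀ → B₁ ∈ K₀ → B₂ ∈ K₀ →
    ∀ (f₁ : A ↪[L] B₁) (f₂ : A ↪[L] B₂),
      ∃ (C : Bundled.{w} L.Structure) (g₁ : B₁ →[L] C) (g₂ : B₂ →[L] C),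
        C ∈ K₀ ∧ IsPushoutSquare L K f₁ f₂ g₁ g₂

/-- The amalgamated extension property. -/
def AmalgamatedExtension (K : Set (Bundled.{w} L.Structure)) : Prop :=
  ∀ A B₁ B₂ T : Bundled.{w} L.Structure, A ∈ K → B₁ ∈ K → B₂ ∈ K → T ∈ K →
    ∀ (f₁ : A ↪[L] B₁) (f₂ : A ↪[L] B₂) (h₁ : B₁ →[L] T) (h₂ : B₂ →[L] T),
      h₁.comp f₁.toHom = h₂.comp f₂.toHom →
      ∃ (C T' : Bundled.{w} L.Structure) (g₁ : B₁ ↪[L] C) (g₂ : B₂ ↪[L] C)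
        (k : T ↪[L] T') (h : C →[L] T'),
        C ∈ K ∧ T' ∈ K ∧ g₁.comp f₁ = g₂.comp f₂ ∧
        h.comp g₁.toHom = k.toHom.comp h₁ ∧ h.comp g₂.toHom = k.toHom.comp h₂

/-- The homo amalgamation property (HAP). -/
def HAP (K : Set (Bundled.{w} L.Structure)) : Prop :=
  ∀ A B₁ B₂ : Bundled.{w} L.Structure, A ∈ K → B₁ ∈ K → B₂ ∈ K →
    ∀ (f₁ : A ↪[L] B₁) (f₂ : A →[L] B₂),
      ∃ (C : Bundled.{w} L.Structure) (g₁ : B₁ →[L] C) (g₂ : B₂ ↪[L] C),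
        C ∈ K ∧ g₁.comp f₁.toHom = g₂.toHom.comp f₂

/-- A homomorphism `r : A → B` is a retraction if it has a section. -/
def IsRetraction {A B : Type w} [L.Structure A] [L.Structure B] (r : A →[L] B) : Prop :=
  ∃ ι : B →[L] A, ∀ b : B, r (ι b) = b

end UHomog

namespace UHomog

open FirstOrder FirstOrder.Language in
/-- A structure is homomorphism homogeneous if every homomorphism between finitely generated
substructures extends to an endomorphism. -/
def IsHomomorphismHomogeneous (L : FirstOrder.Language.{u, v}) (M : Type w)
    [L.Structure M] : Prop :=
  ∀ S T : L.Substructure M, S.FG → T.FG → ∀ h : S →[L] T,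
    ∃ g : M →[L] M, ∀ s : S, g (s : M) = (h s : M)

end UHomog

namespace UHomogAux

open UHomog FirstOrder FirstOrder.Language

variable {L : FirstOrder.Language.{u, v}} {U : Type w} [L.Structure U]

lemma age_substructure_subset (S : L.Substructure U) : L.age (↥S) ⊆ L.age U :=
  fun N hN => ⟨hN.1, hN.2.map fun e => S.subtype.comp e⟩

lemma inBar_substructure [Countable U] (S : L.Substructure U) :
    InBar L (L.age U) (↥S) :=
  ⟨inferInstance, age_substructure_subset S⟩

/-- The "forth" lemma: under the hypotheses, any embedding of a finitely generated
substructure extends (on the domain side) to any larger finitely generated substructure. -/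
lemma forth [Countable U] (u : U →[L] U)
    (huniv : IsUniversalHom L (L.age U) u) (hhom : IsHomogeneousHom L u)
    (hHH : IsHomomorphismHomogeneous L U)
    {S S' : L.Substructure U} (hS : S.FG) (hle : S ≤ S')
    (p : (↥S) ↪[L] U) :
    ∃ q : (↥S') ↪[L] U, ∀ x : S, q (Substructure.inclusion hle x) = p x := by
  -- Step 1: extend `p` (as a homomorphism onto its range) to an endomorphism `g` of `U`.
  obtain ⟨g, hg⟩ := hHH S p.toHom.range hS (((S.fg_iff_structure_fg).1 hS).range p.toHom)
    p.equivRange.toHom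
  have hgp : ∀ s : S, g (s : U) = p s := by
    intro s
    rw [hg s]
    exact p.equivRange_apply s
  -- Step 2: factor `u ∘ g` restricted to `S'` through an embedding `ι : S' ↪ U`.
  obtain ⟨ι, hι⟩ := huniv ⟨↥S', inferInstance⟩ (inBar_substructure S')
    ((u.comp g).comp (S'.subtype.toHom))
  -- Step 3: on `S`, `u ∘ ι` agrees with `u ∘ p`.
  set e : (↥S) ↪[L] U := ι.comp (Substructure.inclusion hle) with he
  have key : ∀ s : S, u (e s) = u (p s) := by
    intro s
    have h1 := hι (Substructure.inclusion hle s)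
    have h2 : (S'.subtype (Substructure.inclusion hle s) : U) = (s : U) := rfl
    simp only [Hom.comp_apply, Embedding.coe_toHom, h2] at h1
    rw [he]
    simp only [Embedding.comp_apply]
    rw [h1, hgp s]
  -- Step 4: use homogeneity of `u` to correct `ι` back to `p` on `S`.
  have hmem : ∀ s : S, e s ∈ e.toHom.range := by
    intro s
    exact Hom.mem_range.2 ⟨s, rfl⟩
  have compat : ∀ r : e.toHom.range,
      u ((p.comp e.equivRange.symm.toEmbedding) r) = u (r : U) := by
    intro r
    set x := e.equivRange.symm r with hx
    have hex : e x = (r : U) := by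
      have : e.equivRange x = r := by rw [hx]; exact e.equivRange.apply_symm_apply r
      rw [← this]
      exact (e.equivRange_apply x).symm
    have : (p.comp e.equivRange.symm.toEmbedding) r = p x := rfl
    rw [this, ← key x, hex]
  obtain ⟨α, hα1, hα2⟩ := hhom e.toHom.range (((S.fg_iff_structure_fg).1 hS).range e.toHom)
    (p.comp e.equivRange.symm.toEmbedding) compat
  -- Step 5: `q := α ∘ ι` works.
  refine ⟨α.toEmbedding.comp ι, fun x => ?_⟩
  have h3 : α.toEmbedding.comp ι (Substructure.inclusion hle x) = α (e x) := rfl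
  rw [h3]
  have h4 := hα2 ⟨e x, hmem x⟩
  have h5 : ((⟨e x, hmem x⟩ : e.toHom.range) : U) = e x := rfl
  rw [h5] at h4
  rw [h4]
  have h6 : (p.comp e.equivRange.symm.toEmbedding) ⟨e x, hmem x⟩ =
      p (e.equivRange.symm ⟨e x, hmem x⟩) := rfl
  rw [h6]
  congr 1
  have h7 : e.equivRange x = ⟨e x, hmem x⟩ := by
    apply Subtype.ext
    exact e.equivRange_apply x
  rw [← h7]
  exact e.equivRange.symm_apply_apply x

end UHomogAux

open UHomog FirstOrder FirstOrder.Language in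
/-- Proposition: a countable structure with a universal homogeneous endomorphism is homogeneous
if and only if it is homomorphism homogeneous. -/
theorem statement10
    (L : FirstOrder.Language.{u, v})
    [Countable (Σ l, L.Functions l)] [Countable (Σ l, L.Relations l)]
    (U : Type w) [L.Structure U] [Countable U]
    (u : U →[L] U)
    (huniv : IsUniversalHom L (L.age U) u) (hhom : IsHomogeneousHom L u) :
    IsUltrahomogeneous L U ↔ IsHomomorphismHomogeneous L U := by
  constructor
  · -- homogeneous → homomorphism homogeneous
    intro hU S T hS hT h
    obtain ⟨ι, hι⟩ := huniv ⟨↥S, inferInstance⟩ (UHomogAux.inBar_substructure S)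
      ((T.subtype.toHom).comp h)
    obtain ⟨g, hg⟩ := hU S hS ι
    refine ⟨u.comp g.toHom, fun s => ?_⟩
    have h1 : ι s = g (s : U) := by
      rw [hg]; rfl
    have h2 := hι s
    simp only [Hom.comp_apply, Embedding.coe_toHom] at h2
    calc (u.comp g.toHom) (s : U) = u (g (s : U)) := rfl
      _ = u (ι s) := by rw [h1]
      _ = (h s : U) := h2
  · -- homomorphism homogeneous → homogeneous
    intro hHH
    have hCG : Structure.CG L U := Structure.cg_iff_countable.2 inferInstance
    rw [isUltrahomogeneous_iff_IsExtensionPair hCG]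
    rintro ⟨f, hf⟩ m
    set S' : L.Substructure U := f.dom ⊔ Substructure.closure L {m} with hS'
    have hle : f.dom ≤ S' := le_sup_left
    obtain ⟨q, hq⟩ := UHomogAux.forth u huniv hhom hHH hf hle
      ((Substructure.subtype f.cod).comp f.toEquiv.toEmbedding)
    refine ⟨⟨⟨S', q.toHom.range, q.equivRange⟩, hf.sup (Substructure.fg_closure_singleton m)⟩,
      (Substructure.subset_closure.trans (le_sup_right : _ ≤ S')) (Set.mem_singleton m),
      ⟨hle, ?_⟩⟩
    ext x
    simp only [Embedding.comp_apply, Equiv.coe_toEmbedding, Substructure.coe_subtype]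
    have := hq x
    simp only [Embedding.comp_apply, Equiv.coe_toEmbedding, Substructure.coe_subtype] at this
    rw [← this]
    rfl
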